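/- Let f : U → F be a C¹-map between subsets of topological K-vector spaces (U with dense interior). If t ∈ Kˣ and (x, y, ts) ∈ U^{[1]}, then (x, ty, s) ∈ U^{[1]} and t · f^{[1]}(x, y, ts) = f^{[1]}(x, ty, s). -/

import Mathlib

/-- scaling identity for the extended difference quotient of a C¹-map:
if `t ≠ 0` and `(x, y, t*s) ∈ U^[1]`, then `(x, t•y, s) ∈ U^[1]` and
`t • f^[1](x, y, t*s) = f^[1](x, t•y, s)`. -/
theorem stmt2 {K E F : Type*} [Field K] [TopologicalSpace K] [IsTopologicalRing K]
    [AddCommGroup E] [Module K E] [TopologicalSpace E] [IsTopologicalAddGroup E]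
    [ContinuousSMul K E]
    [AddCommGroup F] [Module K F] [TopologicalSpace F] [IsTopologicalAddGroup F]
    [ContinuousSMul K F]
    (U : Set E) (hUdense : U ⊆ closure (interior U))
    (f : E → F) (f1 : E × E × K → F)
    (hf : ContinuousOn f U)
    (hcont : ContinuousOn f1 {p : E × E × K | p.1 ∈ U ∧ p.1 + p.2.2 • p.2.1 ∈ U})
    (hdq : ∀ (x y : E) (t : K), t ≠ 0 → x ∈ U → x + t • y ∈ U →
      f1 (x, y, t) = t⁻¹ • (f (x + t • y) - f x))
    (hlin : ∀ x ∈ U, IsLinearMap K fun y : E => f1 (x, y, 0)) :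
    ∀ (x y : E) (t s : K), t ≠ 0 → x ∈ U → x + (t * s) • y ∈ U →
      (x + s • (t • y) ∈ U ∧ t • f1 (x, y, t * s) = f1 (x, t • y, s)) := by
  intro x y t s ht hx hxts
  have hsmul : s • (t • y) = (t * s) • y := by rw [smul_smul, mul_comm]
  by_cases hs : s = 0
  · subst hs
    refine ⟨by simpa using hx, ?_⟩
    have := (hlin x hx).map_smul t y
    simpa [mul_zero] using this.symm
  · refine ⟨by rw [hsmul]; exact hxts, ?_⟩
    rw [hdq x y (t * s) (mul_ne_zero ht hs) hx hxts,
      hdq x (t • y) s hs hx (by rw [hsmul]; exact hxts), hsmul, smul_smul,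
      mul_inv, ← mul_assoc, mul_inv_cancel₀ ht, one_mul]
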